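/- Let (H=(V∪R, A∪E), M=(R,r_M)) be a matroid-rooted mixed hypergraph, {B_r}_{r∈R} a matroid-reachability-based packing of mixed hyperarborescences (with trimmed r-arborescences B_r), let C be a strongly connected component of H−R, and let {X^i}_{i=1}^ℓ be a biset subpartition of C with X_W^i = P^H_{X_W^i} for all i. Then e_E({X_I^i}_1^ℓ) + Σ_{i=1}^ℓ d_A^-(X^i) ≥ Σ_{i=1}^ℓ ( r_M(P^H_C∩R) − r_M(X_W^i∩R) ). -/

import Mathlib

open Set

/-- One step along an arc of `B` in the digraph given by tail/head maps. -/
def stepOn {α β : Type} (tl hd : β → α) (B : Set β) (u v : α) : Prop :=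
  ∃ a ∈ B, tl a = u ∧ hd a = v

/-- Reachability using only arcs of `B`. -/
def reachOn {α β : Type} (tl hd : β → α) (B : Set β) (u v : α) : Prop :=
  Relation.ReflTransGen (stepOn tl hd B) u v

/-- The vertex set of the arc set `B` together with the root `r`. -/
def vertsOf {α β : Type} (tl hd : β → α) (B : Set β) (r : α) : Set α :=
  insert r (tl '' B ∪ hd '' B)

/-- `B` is an `r`-arborescence: no arc enters the root, every other vertex of `B`
has exactly one entering arc, and every vertex of `B` is reachable from `r` in `B`. -/
noncomputable def IsArbor {α β : Type} (tl hd : β → α) (B : Set β) (r : α) : Prop :=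
  (∀ a ∈ B, hd a ≠ r) ∧
  (∀ v ∈ vertsOf tl hd B r, v ≠ r → {a ∈ B | hd a = v}.ncard = 1) ∧
  (∀ v ∈ vertsOf tl hd B r, reachOn tl hd B r v)

/-- Number of arcs entering the vertex set `X`. -/
noncomputable def dIn {α β : Type} (tl hd : β → α) (X : Set α) : ℕ :=
  {a : β | hd a ∈ X ∧ tl a ∉ X}.ncard


/-- Reachability in the whole digraph. -/
def reaches {α β : Type} (tl hd : β → α) (u v : α) : Prop :=
  reachOn tl hd Set.univ u v

/-- `P_X^D`: the set of vertices from which some vertex of `X` is reachable. -/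
def Pset {α β : Type} (tl hd : β → α) (X : Set α) : Set α :=
  {v | ∃ x ∈ X, reaches tl hd v x}

/-- A matroid given by its rank function. -/
structure RankFn (α : Type) where
  rk : Set α → ℕ
  rk_empty : rk ∅ = 0
  subcard : ∀ X : Set α, X.Finite → rk X ≤ X.ncard
  mono : ∀ X Y : Set α, X ⊆ Y → rk X ≤ rk Y
  submod : ∀ X Y : Set α, rk (X ∪ Y) + rk (X ∩ Y) ≤ rk X + rk Y
  unit : ∀ (X : Set α) (y : α), rk (insert y X) ≤ rk X + 1

/-- `B` is a basis of `X` in the matroid `M`. -/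
def IsBasisOf {α : Type} (M : RankFn α) (B X : Set α) : Prop :=
  B ⊆ X ∧ B.ncard = M.rk B ∧ M.rk B = M.rk X

/-- One step of a mixed hyperpath: along a dyperedge from a tail vertex to the
head, or between two distinct vertices of a hyperedge. -/
def stepH {α δ ε : Type} (hdD : δ → α) (tlD : δ → Set α) (vE : ε → Set α)
    (u v : α) : Prop :=
  (∃ a : δ, u ∈ tlD a ∧ v = hdD a) ∨ (∃ e : ε, u ∈ vE e ∧ v ∈ vE e ∧ u ≠ v)

/-- Reachability by mixed hyperpaths in the mixed hypergraph. -/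
def reachH {α δ ε : Type} (hdD : δ → α) (tlD : δ → Set α) (vE : ε → Set α)
    (u v : α) : Prop :=
  Relation.ReflTransGen (stepH hdD tlD vE) u v

/-- `P_X^H`: vertices from which some vertex of `X` is reachable by a mixed
hyperpath. -/
def PH {α δ ε : Type} (hdD : δ → α) (tlD : δ → Set α) (vE : ε → Set α)
    (X : Set α) : Set α :=
  {v | ∃ x ∈ X, reachH hdD tlD vE v x}

/-- One step of a mixed hyperpath in `H − R` (all vertices of `R` deleted). -/
def stepHR {α δ ε : Type} (hdD : δ → α) (tlD : δ → Set α) (vE : ε → Set α)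
    (R : Set α) (u v : α) : Prop :=
  u ∉ R ∧ v ∉ R ∧
    ((∃ a : δ, u ∈ tlD a ∧ v = hdD a ∧ tlD a ∩ R = ∅) ∨
     (∃ e : ε, u ∈ vE e ∧ v ∈ vE e ∧ u ≠ v ∧ vE e ∩ R = ∅))

/-- Reachability in `H − R`. -/
def reachHR {α δ ε : Type} (hdD : δ → α) (tlD : δ → Set α) (vE : ε → Set α)
    (R : Set α) (u v : α) : Prop :=
  Relation.ReflTransGen (stepHR hdD tlD vE R) u v

/-- The sets `(BA, BE)` of dyperedges and hyperedges trim, via the choices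
`fA` (a tail vertex for each dyperedge) and `fE` (an ordered pair of distinct
vertices for each hyperedge), to an `r`-arborescence. -/
noncomputable def TrimsToArbor {α δ ε : Type} (hdD : δ → α) (tlD : δ → Set α)
    (vE : ε → Set α) (BA : Set δ) (BE : Set ε) (r : α)
    (fA : δ → α) (fE : ε → α × α) : Prop :=
  (∀ a ∈ BA, fA a ∈ tlD a) ∧
  (∀ e ∈ BE, (fE e).1 ∈ vE e ∧ (fE e).2 ∈ vE e ∧ (fE e).1 ≠ (fE e).2) ∧
  IsArbor (Sum.elim fA (fun e => (fE e).1)) (Sum.elim hdD (fun e => (fE e).2))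
    (Sum.inl '' BA ∪ Sum.inr '' BE) r

/-- The vertex set of the trimming of `(BA, BE)` given by `(fA, fE)`. -/
def trimVerts {α δ ε : Type} (hdD : δ → α)
    (BA : Set δ) (BE : Set ε) (r : α) (fA : δ → α) (fE : ε → α × α) : Set α :=
  vertsOf (Sum.elim fA (fun e => (fE e).1)) (Sum.elim hdD (fun e => (fE e).2))
    (Sum.inl '' BA ∪ Sum.inr '' BE) r

/-- Number of dyperedges entering the biset `(X_O, X_I)`. -/
noncomputable def dInBiset {α δ : Type} (hdD : δ → α) (tlD : δ → Set α)
    (XO XI : Set α) : ℕ :=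
  {a : δ | hdD a ∈ XI ∧ ¬ tlD a ⊆ XO}.ncard

/-- Number of hyperedges entering some member of the subpartition `XI`. -/
noncomputable def eEnter {α ε : Type} (vE : ε → Set α) {ℓ : ℕ}
    (XI : Fin ℓ → Set α) : ℕ :=
  {e : ε | ∃ i, (vE e ∩ XI i).Nonempty ∧ (vE e \ XI i).Nonempty}.ncard

section Aux

open Classical

/-- Rank of a union is at most rank plus cardinality of the added finite set. -/
lemma rk_union_le_aux {α : Type} (M : RankFn α) (X : Set α) {S : Set α} (hS : S.Finite) :
    M.rk (X ∪ S) ≤ M.rk X + S.ncard := by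
  refine Set.Finite.induction_on _ hS ?_ fun {a s} ha hs ih => ?_
  · simpa using M.mono _ _ (by simp)
  · have h1 : X ∪ insert a s = insert a (X ∪ s) := by
      ext x; simp [or_comm, or_left_comm, or_assoc]
    rw [h1, Set.ncard_insert_of_notMem ha hs]
    calc M.rk (insert a (X ∪ s)) ≤ M.rk (X ∪ s) + 1 := M.unit _ _
      _ ≤ M.rk X + s.ncard + 1 := by omega

/-- If a walk in `B` starts outside `XI` and ends inside, some arc of the walk
enters `XI`, and its tail is reachable from the start. -/
lemma cross_exists_aux {α β : Type} (tl hd : β → α) (B : Set β) (XI : Set α)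
    {u v : α} (h : reachOn tl hd B u v) :
    v ∈ XI → u ∉ XI →
      ∃ b ∈ B, hd b ∈ XI ∧ tl b ∉ XI ∧ reachOn tl hd B u (tl b) := by
  induction h with
  | refl => exact fun hv hu => absurd hv hu
  | @tail w v hr hstep ih =>
    intro hv hu
    by_cases hw : w ∈ XI
    · exact ih hw hu
    · obtain ⟨b, hb, htl, hhd⟩ := hstep
      exact ⟨b, hb, hhd ▸ hv, htl ▸ hw, htl ▸ hr⟩

/-- A walk in a trimmed arborescence is a mixed hyperpath. -/
lemma reachOn_trim_reachH_aux {α δ ε : Type} (hdD : δ → α) (tlD : δ → Set α)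
    (vE : ε → Set α) (BA : Set δ) (BE : Set ε) (fA : δ → α) (fE : ε → α × α)
    (hfA : ∀ a ∈ BA, fA a ∈ tlD a)
    (hfE : ∀ e ∈ BE, (fE e).1 ∈ vE e ∧ (fE e).2 ∈ vE e ∧ (fE e).1 ≠ (fE e).2)
    {u v : α}
    (h : reachOn (Sum.elim fA (fun e => (fE e).1)) (Sum.elim hdD (fun e => (fE e).2))
      (Sum.inl '' BA ∪ Sum.inr '' BE) u v) :
    reachH hdD tlD vE u v := by
  refine Relation.ReflTransGen.mono ?_ u v h
  rintro x y ⟨b, hb, htl, hhd⟩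
  rcases hb with ⟨a, ha, rfl⟩ | ⟨e, he, rfl⟩
  · exact Or.inl ⟨a, htl ▸ hfA a ha, hhd.symm⟩
  · obtain ⟨h1, h2, h3⟩ := hfE e he
    exact Or.inr ⟨e, htl ▸ h1, hhd ▸ h2, htl ▸ hhd ▸ h3⟩

/-- A path in `H − R` is a mixed hyperpath. -/
lemma reachHR_reachH_aux {α δ ε : Type} (hdD : δ → α) (tlD : δ → Set α)
    (vE : ε → Set α) (R : Set α) {u v : α} (h : reachHR hdD tlD vE R u v) :
    reachH hdD tlD vE u v := by
  refine Relation.ReflTransGen.mono ?_ u v h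
  rintro x y ⟨-, -, ⟨a, ha, rfl, -⟩ | ⟨e, h1, h2, h3, -⟩⟩
  · exact Or.inl ⟨a, ha, rfl⟩
  · exact Or.inr ⟨e, h1, h2, h3⟩

/-- Sum of cardinalities of pairwise disjoint sets is at most the cardinality
of their union. -/
lemma sum_ncard_le_ncard_biUnion_aux {ι γ : Type} [Fintype γ] (s : Finset ι)
    (T : ι → Set γ)
    (hdisj : ∀ i ∈ s, ∀ j ∈ s, i ≠ j → Disjoint (T i) (T j)) :
    ∑ i ∈ s, (T i).ncard ≤ (⋃ i ∈ s, T i).ncard := by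
  induction s using Finset.induction_on with
  | empty => simp
  | @insert a s ha ih =>
    rw [Finset.sum_insert ha, Finset.set_biUnion_insert]
    have hdis : Disjoint (T a) (⋃ i ∈ s, T i) := by
      rw [Set.disjoint_iUnion₂_right]
      intro i hi
      exact hdisj a (Finset.mem_insert_self a s) i (Finset.mem_insert_of_mem hi)
        (fun h => ha (h ▸ hi))
    rw [Set.ncard_union_eq hdis (Set.toFinite _) (Set.toFinite _)]
    have := ih (fun i hi j hj hij =>
      hdisj i (Finset.mem_insert_of_mem hi) j (Finset.mem_insert_of_mem hj) hij)
    omega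

/-- Cardinality of a finite union is at most the sum of cardinalities. -/
lemma ncard_biUnion_le_aux {ι γ : Type} [Fintype γ] (s : Finset ι) (T : ι → Set γ) :
    (⋃ i ∈ s, T i).ncard ≤ ∑ i ∈ s, (T i).ncard := by
  induction s using Finset.induction_on with
  | empty => simp
  | @insert a s ha ih =>
    rw [Finset.sum_insert ha, Finset.set_biUnion_insert]
    calc (T a ∪ ⋃ i ∈ s, T i).ncard
        ≤ (T a).ncard + (⋃ i ∈ s, T i).ncard := Set.ncard_union_le _ _
      _ ≤ _ := by omega

end Aux

/-- Necessity direction of the main theorem: a matroid-reachability-based packing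
of mixed hyperarborescences satisfies the biset cut condition. -/
theorem mixed_hyper_reachability_necessity
    {α δ ε : Type} [Fintype α] [Fintype δ] [Fintype ε]
    (V R : Set α) (hdD : δ → α) (tlD : δ → Set α) (vE : ε → Set α)
    (hpart : V ∪ R = Set.univ) (hdisj : Disjoint V R)
    (htail : ∀ a : δ, (tlD a).Nonempty)
    (hheadtail : ∀ a : δ, hdD a ∉ tlD a)
    (hhyp2 : ∀ e : ε, 2 ≤ (vE e).ncard)
    (hrootA : ∀ a : δ, hdD a ∉ R)
    (hrootE : ∀ e : ε, vE e ∩ R = ∅)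
    (hleave : ∀ a : δ, ∀ r ∈ R, r ∈ tlD a → tlD a = {r})
    (M : RankFn α)
    (BA : α → Set δ) (BE : α → Set ε)
    (fA : α → δ → α) (fE : α → ε → α × α)
    (hdisjA : ∀ r ∈ R, ∀ r' ∈ R, r ≠ r' → Disjoint (BA r) (BA r'))
    (hdisjE : ∀ r ∈ R, ∀ r' ∈ R, r ≠ r' → Disjoint (BE r) (BE r'))
    (htrim : ∀ r ∈ R, TrimsToArbor hdD tlD vE (BA r) (BE r) r (fA r) (fE r))
    (hbasis : ∀ v ∈ V, IsBasisOf M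
      {r ∈ R | v ∈ trimVerts hdD (BA r) (BE r) r (fA r) (fE r)}
      (PH hdD tlD vE {v} ∩ R))
    (C : Set α) (hCV : C ⊆ V) (hCne : C.Nonempty)
    (hscc : ∀ u ∈ C, ∀ v ∈ C, reachHR hdD tlD vE R u v)
    (hmax : ∀ u v : α, v ∈ C → u ∉ R →
      reachHR hdD tlD vE R u v → reachHR hdD tlD vE R v u → u ∈ C)
    (ℓ : ℕ) (XO XI : Fin ℓ → Set α)
    (hsub : ∀ i, XI i ⊆ XO i)
    (hne : ∀ i, (XI i).Nonempty)
    (hinC : ∀ i, XI i ⊆ C)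
    (hdisjI : ∀ i j, i ≠ j → Disjoint (XI i) (XI j))
    (hwall : ∀ i, (XO i \ XI i) ∩ C = ∅)
    (hclosed : ∀ i, PH hdD tlD vE (XO i \ XI i) = XO i \ XI i) :
    (eEnter vE XI : ℤ) + ∑ i : Fin ℓ, (dInBiset hdD tlD (XO i) (XI i) : ℤ)
      ≥ ∑ i : Fin ℓ, ((M.rk (PH hdD tlD vE C ∩ R) : ℤ)
          - (M.rk ((XO i \ XI i) ∩ R) : ℤ)) := by
  classical
  set W : Fin ℓ → Set α := fun i => XO i \ XI i with hWdef
  let v : Fin ℓ → α := fun i => (hne i).choose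
  have hv : ∀ i, v i ∈ XI i := fun i => (hne i).choose_spec
  have hvC : ∀ i, v i ∈ C := fun i => hinC i (hv i)
  set B : Fin ℓ → Set α := fun i =>
    {r ∈ R | v i ∈ trimVerts hdD (BA r) (BE r) r (fA r) (fE r)} with hBdef
  have hBsub : ∀ i, B i ⊆ R := fun i r hr => hr.1
  set K : Fin ℓ → Set α := fun i => B i \ W i with hKdef
  -- rank of `PH C ∩ R` equals the cardinality of each basis `B i`
  have hrkC : ∀ i, M.rk (PH hdD tlD vE C ∩ R) = (B i).ncard := by
    intro i
    obtain ⟨h1, h2, h3⟩ := hbasis (v i) (hCV (hvC i))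
    have hPH : PH hdD tlD vE C = PH hdD tlD vE {v i} := by
      apply Set.Subset.antisymm
      · rintro u ⟨x, hx, hux⟩
        exact ⟨v i, rfl,
          hux.trans (reachHR_reachH_aux hdD tlD vE R (hscc x hx (v i) (hvC i)))⟩
      · rintro u ⟨x, hx, hux⟩
        rw [Set.mem_singleton_iff] at hx
        exact ⟨x, hx ▸ hvC i, hux⟩
    rw [hPH, ← h3, ← h2]
  have hb2 : ∀ i, (B i).ncard = M.rk (B i) :=
    fun i => (hbasis (v i) (hCV (hvC i))).2.1
  -- rank bound : rk (PH C ∩ R) ≤ rk (W i ∩ R) + |K i|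
  have hKbound : ∀ i, M.rk (PH hdD tlD vE C ∩ R) ≤ M.rk (W i ∩ R) + (K i).ncard := by
    intro i
    have hsubU : B i ⊆ (W i ∩ R) ∪ (B i \ (W i ∩ R)) := by
      intro r hr
      by_cases h : r ∈ W i ∩ R
      · exact Or.inl h
      · exact Or.inr ⟨hr, h⟩
    have hd : B i \ (W i ∩ R) = K i := by
      ext r
      simp only [hKdef, Set.mem_diff, Set.mem_inter_iff]
      constructor
      · rintro ⟨hr, h⟩; exact ⟨hr, fun hw => h ⟨hw, hBsub i hr⟩⟩
      · rintro ⟨hr, h⟩; exact ⟨hr, fun hw => h hw.1⟩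
    calc M.rk (PH hdD tlD vE C ∩ R) = (B i).ncard := hrkC i
      _ = M.rk (B i) := hb2 i
      _ ≤ M.rk ((W i ∩ R) ∪ (B i \ (W i ∩ R))) := M.mono _ _ hsubU
      _ ≤ M.rk (W i ∩ R) + (B i \ (W i ∩ R)).ncard :=
          rk_union_le_aux M _ (Set.toFinite _)
      _ = M.rk (W i ∩ R) + (K i).ncard := by rw [hd]
  -- crossing lemma : each pair (i, r) with r ∈ K i gives an entering arc
  have hcross : ∀ i, ∀ r ∈ K i,
      (∃ a ∈ BA r, hdD a ∈ XI i ∧ ¬ tlD a ⊆ XO i) ∨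
      (∃ e ∈ BE r, (fE r e).2 ∈ XI i ∧ (fE r e).1 ∈ vE e ∧ (fE r e).2 ∈ vE e ∧
        (fE r e).1 ∉ XI i) := by
    intro i r hr
    obtain ⟨⟨hrR, hrv⟩, hrW⟩ := hr
    obtain ⟨hfA, hfE, harb⟩ := htrim r hrR
    have hreach : reachOn (Sum.elim (fA r) (fun e => (fE r e).1))
        (Sum.elim hdD (fun e => (fE r e).2))
        (Sum.inl '' BA r ∪ Sum.inr '' BE r) r (v i) := harb.2.2 (v i) hrv
    have hrnotI : r ∉ XI i := fun h =>
      Set.disjoint_left.mp hdisj (hCV (hinC i h)) hrR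
    obtain ⟨b, hb, hhd, htl, hrtl⟩ :=
      cross_exists_aux _ _ _ (XI i) hreach (hv i) hrnotI
    have htlO : Sum.elim (fA r) (fun e => (fE r e).1) b ∉ XO i := by
      intro hO
      have hWm : Sum.elim (fA r) (fun e => (fE r e).1) b ∈ W i := ⟨hO, htl⟩
      have hrPH : r ∈ PH hdD tlD vE (W i) :=
        ⟨_, hWm, reachOn_trim_reachH_aux hdD tlD vE _ _ _ _ hfA hfE hrtl⟩
      rw [hWdef, hclosed i] at hrPH
      exact hrW hrPH
    rcases hb with ⟨a, ha, rfl⟩ | ⟨e, he, rfl⟩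
    · exact Or.inl ⟨a, ha, hhd, fun hs' => htlO (hs' (hfA a ha))⟩
    · obtain ⟨h1, h2, h3⟩ := hfE e he
      exact Or.inr ⟨e, he, hhd, h1, h2, fun hI => htlO (hsub i hI)⟩
  -- the witnessing arc, as an element of `δ ⊕ ε`
  let Q : Fin ℓ × α → δ ⊕ ε → Prop := fun p b =>
    match b with
    | .inl a => a ∈ BA p.2 ∧ hdD a ∈ XI p.1 ∧ ¬ tlD a ⊆ XO p.1
    | .inr e => e ∈ BE p.2 ∧ (fE p.2 e).2 ∈ XI p.1 ∧ (fE p.2 e).1 ∈ vE e ∧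
        (fE p.2 e).2 ∈ vE e ∧ (fE p.2 e).1 ∉ XI p.1
  let f : Fin ℓ × α → Option (δ ⊕ ε) := fun p =>
    if h : ∃ b, Q p b then some h.choose else none
  have hQex : ∀ i, ∀ r ∈ K i, ∃ b, Q (i, r) b := by
    intro i r hr
    rcases hcross i r hr with ⟨a, ha, h1, h2⟩ | ⟨e, he, h1, h2, h3, h4⟩
    · exact ⟨Sum.inl a, ha, h1, h2⟩
    · exact ⟨Sum.inr e, he, h1, h2, h3, h4⟩
  have hfQ : ∀ i, ∀ r ∈ K i, ∃ b, f (i, r) = some b ∧ Q (i, r) b := by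
    intro i r hr
    have h := hQex i r hr
    exact ⟨h.choose, dif_pos h, h.choose_spec⟩
  have hQinj : ∀ i j r r', r ∈ R → r' ∈ R → ∀ b,
      Q (i, r) b → Q (j, r') b → i = j ∧ r = r' := by
    intro i j r r' hrR hr'R b hQ1 hQ2
    cases b with
    | inl a =>
      obtain ⟨ha1, hh1, -⟩ := hQ1
      obtain ⟨ha2, hh2, -⟩ := hQ2
      have hrr : r = r' := by
        by_contra hne'
        exact Set.disjoint_left.mp (hdisjA r hrR r' hr'R hne') ha1 ha2
      have hij : i = j := by
        by_contra hne'
        exact Set.disjoint_left.mp (hdisjI i j hne') hh1 hh2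
      exact ⟨hij, hrr⟩
    | inr e =>
      obtain ⟨he1, hh1, -⟩ := hQ1
      obtain ⟨he2, hh2, -⟩ := hQ2
      have hrr : r = r' := by
        by_contra hne'
        exact Set.disjoint_left.mp (hdisjE r hrR r' hr'R hne') he1 he2
      subst hrr
      have hij : i = j := by
        by_contra hne'
        exact Set.disjoint_left.mp (hdisjI i j hne') hh1 hh2
      exact ⟨hij, rfl⟩
  -- image sets
  let I : Fin ℓ → Set (Option (δ ⊕ ε)) := fun i => (fun r => f (i, r)) '' K i
  have hInj : ∀ i, Set.InjOn (fun r => f (i, r)) (K i) := by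
    intro i r hr r' hr' heq
    obtain ⟨b, hb, hQb⟩ := hfQ i r hr
    obtain ⟨b', hb', hQb'⟩ := hfQ i r' hr'
    simp only at heq
    rw [hb, hb'] at heq
    injection heq with h
    subst h
    exact (hQinj i i r r' (hBsub i hr.1) (hBsub i hr'.1) b hQb hQb').2
  have hIdisj : ∀ i ∈ Finset.univ, ∀ j ∈ (Finset.univ : Finset (Fin ℓ)),
      i ≠ j → Disjoint (I i) (I j) := by
    intro i _ j _ hij
    rw [Set.disjoint_left]
    rintro x ⟨r, hr, rfl⟩ ⟨r', hr', heq⟩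
    obtain ⟨b, hb, hQb⟩ := hfQ i r hr
    obtain ⟨b', hb', hQb'⟩ := hfQ j r' hr'
    simp only at heq
    rw [hb, hb'] at heq
    injection heq with h
    rw [h] at hQb'
    exact hij ((hQinj j i r' r (hBsub j hr'.1) (hBsub i hr.1) b hQb' hQb).1).symm
  -- target set
  let D : Set δ := {a | ∃ i, hdD a ∈ XI i ∧ ¬ tlD a ⊆ XO i}
  let Ee : Set ε := {e | ∃ i, (vE e ∩ XI i).Nonempty ∧ (vE e \ XI i).Nonempty}
  let T : Set (Option (δ ⊕ ε)) := some '' (Sum.inl '' D ∪ Sum.inr '' Ee)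
  have hIT : ∀ i, I i ⊆ T := by
    rintro i x ⟨r, hr, rfl⟩
    obtain ⟨b, hb, hQb⟩ := hfQ i r hr
    simp only
    rw [hb]
    cases b with
    | inl a =>
      obtain ⟨-, hh, ht⟩ := hQb
      exact ⟨Sum.inl a, Or.inl ⟨a, ⟨i, hh, ht⟩, rfl⟩, rfl⟩
    | inr e =>
      obtain ⟨-, hh, h1, h2, h3⟩ := hQb
      exact ⟨Sum.inr e, Or.inr ⟨e, ⟨i, ⟨_, h2, hh⟩, ⟨_, h1, h3⟩⟩, rfl⟩, rfl⟩
  -- counting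
  have hDle : D.ncard ≤ ∑ i : Fin ℓ, dInBiset hdD tlD (XO i) (XI i) := by
    have hD : D = ⋃ i ∈ (Finset.univ : Finset (Fin ℓ)),
        {a : δ | hdD a ∈ XI i ∧ ¬ tlD a ⊆ XO i} := by
      ext a
      simp [D]
    rw [hD]
    exact ncard_biUnion_le_aux _ _
  have hcount : ∑ i : Fin ℓ, (K i).ncard
      ≤ eEnter vE XI + ∑ i : Fin ℓ, dInBiset hdD tlD (XO i) (XI i) := by
    have h1 : ∀ i : Fin ℓ, (K i).ncard = (I i).ncard :=
      fun i => (Set.ncard_image_of_injOn (hInj i)).symm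
    calc ∑ i : Fin ℓ, (K i).ncard = ∑ i : Fin ℓ, (I i).ncard := by
          exact Finset.sum_congr rfl fun i _ => h1 i
      _ ≤ (⋃ i ∈ (Finset.univ : Finset (Fin ℓ)), I i).ncard :=
          sum_ncard_le_ncard_biUnion_aux _ _ hIdisj
      _ ≤ T.ncard := Set.ncard_le_ncard
          (by simpa using fun i => hIT i) (Set.toFinite _)
      _ = (Sum.inl '' D ∪ Sum.inr '' Ee).ncard :=
          Set.ncard_image_of_injective _ (Option.some_injective _)
      _ ≤ (Sum.inl '' D).ncard + (Sum.inr '' Ee).ncard := Set.ncard_union_le _ _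
      _ = D.ncard + Ee.ncard := by
          rw [Set.ncard_image_of_injective _ Sum.inl_injective,
            Set.ncard_image_of_injective _ Sum.inr_injective]
      _ ≤ (∑ i : Fin ℓ, dInBiset hdD tlD (XO i) (XI i)) + eEnter vE XI := by
          have : Ee.ncard = eEnter vE XI := rfl
          omega
      _ = eEnter vE XI + ∑ i : Fin ℓ, dInBiset hdD tlD (XO i) (XI i) := by
          omega
  -- assemble
  rw [ge_iff_le]
  calc ∑ i : Fin ℓ, ((M.rk (PH hdD tlD vE C ∩ R) : ℤ) - (M.rk (W i ∩ R) : ℤ))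
      ≤ ∑ i : Fin ℓ, ((K i).ncard : ℤ) := by
        refine Finset.sum_le_sum fun i _ => ?_
        have := hKbound i
        omega
    _ ≤ (eEnter vE XI : ℤ) + ∑ i : Fin ℓ, (dInBiset hdD tlD (XO i) (XI i) : ℤ) := by
        have := hcount
        push_cast
        exact_mod_cast this
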